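/- For d = 2 and 1/4 ≤ F ≤ 1/2, the isotropic state ρ^iso(F) = F|Φ⁺⟩⟨Φ⁺| + ((1−F)/3)(I_4 − |Φ⁺⟩⟨Φ⁺|) on ℂ²⊗ℂ² is separable; explicitly ρ^iso(F) = (1/4) Σ_{i=1}^4 |ψ_A^{(i)}⟩⟨ψ_A^{(i)}| ⊗ |ψ_B^{(i)}⟩⟨ψ_B^{(i)}| where ψ_A^{(1)} = a|0⟩ − b|1⟩, ψ_B^{(1)} = c|0⟩ − d'|1⟩, ψ_A^{(2)} = b|0⟩ − i a|1⟩, ψ_B^{(2)} = d'|0⟩ + i c|1⟩, ψ_A^{(3)} = a|0⟩ + b|1⟩, ψ_B^{(3)} = c|0⟩ + d'|1⟩, ψ_A^{(4)} = b|0⟩ + i a|1⟩, ψ_B^{(4)} = d'|0⟩ − i c|1⟩, with a = √((3 − √(3−12F²) − 2√3·√((1−F)F))/6), b = √((3 + √(3−12F²) + 2√3·√((1−F)F))/6), c = √((3 + √(3−12F²) − 2√3·√((1−F)F))/6), d' = √((3 − √(3−12F²) + 2√3·√((1−F)F))/6). -/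
import Mathlib


open Matrix BigOperators Kronecker
open scoped ComplexOrder

/-- The rank-one projector `|v⟩⟨v|`. -/
noncomputable def dyad {α : Type*} [Fintype α] (v : α → ℂ) : Matrix α α ℂ :=
  Matrix.vecMulVec v (star v)

/-- Partial trace over the second tensor factor. -/
noncomputable def ptraceB {m n : ℕ} (ρ : Matrix (Fin m × Fin n) (Fin m × Fin n) ℂ) :
    Matrix (Fin m) (Fin m) ℂ := fun i j => ∑ k : Fin n, ρ (i, k) (j, k)

/-- Partial trace over the first tensor factor. -/
noncomputable def ptraceA {m n : ℕ} (ρ : Matrix (Fin m × Fin n) (Fin m × Fin n) ℂ) :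
    Matrix (Fin n) (Fin n) ℂ := fun i j => ∑ k : Fin m, ρ (k, i) (k, j)

/-- A bipartite state is separable if it is a finite convex combination of
tensor products of density matrices. -/
def SepState {m n : ℕ} (ρ : Matrix (Fin m × Fin n) (Fin m × Fin n) ℂ) : Prop :=
  ∃ (d : ℕ) (q : Fin d → ℝ) (σ : Fin d → Matrix (Fin m) (Fin m) ℂ)
    (τ : Fin d → Matrix (Fin n) (Fin n) ℂ),
    (∀ i, 0 ≤ q i) ∧ (∑ i, q i = 1) ∧
    (∀ i, (σ i).PosSemidef ∧ (σ i).trace = 1) ∧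
    (∀ i, (τ i).PosSemidef ∧ (τ i).trace = 1) ∧
    ρ = ∑ i, (q i : ℂ) • (σ i ⊗ₖ τ i)

open Classical in
/-- Eigenvalues of a Hermitian matrix arranged in non-increasing order
(`eigsDesc A 0` is the largest eigenvalue); junk value otherwise. -/
noncomputable def eigsDesc {k : ℕ} (A : Matrix (Fin k) (Fin k) ℂ) : Fin k → ℝ :=
  if h : A.IsHermitian then fun i => (h.eigenvalues ∘ Tuple.sort h.eigenvalues) i.rev
  else fun _ => 0

/-- The `i`-th largest singular value of an `m × n` complex matrix,
`i : Fin (min m n)`. -/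
noncomputable def singVal {m n : ℕ} (A : Matrix (Fin m) (Fin n) ℂ) (i : Fin (min m n)) : ℝ :=
  Real.sqrt (eigsDesc (Aᴴ * A) (Fin.castLE (min_le_right m n) i))

open Classical in
/-- The largest eigenvalue of a Hermitian matrix; junk value otherwise. -/
noncomputable def lamMax {α : Type*} [Fintype α] [DecidableEq α] (A : Matrix α α ℂ) : ℝ :=
  if h : A.IsHermitian then ⨆ i, h.eigenvalues i else 0

/-- Frobenius (Hilbert–Schmidt) norm of a matrix. -/
noncomputable def frobNorm {m n : ℕ} (A : Matrix (Fin m) (Fin n) ℂ) : ℝ :=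
  Real.sqrt ((Aᴴ * A).trace.re)

/-- The maximally entangled two-qubit state `Φ⁺ = (|00⟩ + |11⟩)/√2`. -/
noncomputable def phiPlus2 : Fin 2 × Fin 2 → ℂ := fun x =>
  if x.1 = x.2 then ((Real.sqrt 2 : ℝ) : ℂ)⁻¹ else 0

set_option maxHeartbeats 1000000 in
lemma dyad_psd {α : Type*} [Fintype α] [DecidableEq α] (v : α → ℂ) : (dyad v).PosSemidef := by
  unfold dyad
  rw [Matrix.vecMulVec_eq Unit, ← Matrix.conjTranspose_replicateCol]
  exact Matrix.posSemidef_self_mul_conjTranspose _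

set_option maxHeartbeats 1000000 in
/-- Explicit separable decomposition of the two-qubit isotropic state for
`1/4 ≤ F ≤ 1/2`. -/
theorem stmt15 (F : ℝ) (hF1 : 1 / 4 ≤ F) (hF2 : F ≤ 1 / 2)
    (a b c d' : ℝ)
    (ha : a = Real.sqrt ((3 - Real.sqrt (3 - 12 * F ^ 2) -
        2 * Real.sqrt 3 * Real.sqrt ((1 - F) * F)) / 6))
    (hb : b = Real.sqrt ((3 + Real.sqrt (3 - 12 * F ^ 2) +
        2 * Real.sqrt 3 * Real.sqrt ((1 - F) * F)) / 6))
    (hc : c = Real.sqrt ((3 + Real.sqrt (3 - 12 * F ^ 2) -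
        2 * Real.sqrt 3 * Real.sqrt ((1 - F) * F)) / 6))
    (hd : d' = Real.sqrt ((3 - Real.sqrt (3 - 12 * F ^ 2) +
        2 * Real.sqrt 3 * Real.sqrt ((1 - F) * F)) / 6)) :
    ((F : ℂ) • dyad phiPlus2 + (((1 - F) / 3 : ℝ) : ℂ) • (1 - dyad phiPlus2) =
      (1 / 4 : ℂ) •
        (dyad ![(a : ℂ), -(b : ℂ)] ⊗ₖ dyad ![(c : ℂ), -(d' : ℂ)] +
         dyad ![(b : ℂ), -(Complex.I * (a : ℂ))] ⊗ₖ dyad ![(d' : ℂ), Complex.I * (c : ℂ)] +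
         dyad ![(a : ℂ), (b : ℂ)] ⊗ₖ dyad ![(c : ℂ), (d' : ℂ)] +
         dyad ![(b : ℂ), Complex.I * (a : ℂ)] ⊗ₖ dyad ![(d' : ℂ), -(Complex.I * (c : ℂ))])) ∧
    SepState ((F : ℂ) • dyad phiPlus2 + (((1 - F) / 3 : ℝ) : ℂ) • (1 - dyad phiPlus2)) := by
  
  have hF0 : (0:ℝ) ≤ F := by linarith
  set X := Real.sqrt (3 - 12 * F ^ 2) with hXdef
  set Y := 2 * Real.sqrt 3 * Real.sqrt ((1 - F) * F) with hYdef
  have hX0 : 0 ≤ X := Real.sqrt_nonneg _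
  have hY0 : 0 ≤ Y := by positivity
  have hX2 : X ^ 2 = 3 - 12 * F ^ 2 := Real.sq_sqrt (by nlinarith)
  have hY2 : Y ^ 2 = 12 * F - 12 * F ^ 2 := by
    have h3 : Real.sqrt 3 ^ 2 = 3 := Real.sq_sqrt (by norm_num)
    have h4 : Real.sqrt ((1 - F) * F) ^ 2 = (1 - F) * F := Real.sq_sqrt (by nlinarith)
    rw [hYdef, mul_pow, mul_pow, h3, h4]; ring
  have hXY : X * Y ≤ 3 - 6 * F + 12 * F ^ 2 := by
    have hr : (0:ℝ) ≤ 3 - 6 * F + 12 * F ^ 2 := by nlinarith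
    have h1 : X * Y = Real.sqrt ((X * Y) ^ 2) := (Real.sqrt_sq (mul_nonneg hX0 hY0)).symm
    rw [h1, show (3 - 6 * F + 12 * F ^ 2 : ℝ) = Real.sqrt ((3 - 6 * F + 12 * F ^ 2) ^ 2) from
      (Real.sqrt_sq hr).symm]
    apply Real.sqrt_le_sqrt
    rw [mul_pow, hX2, hY2]
    nlinarith [sq_nonneg (1 - 4 * F)]
  have hXY3 : X + Y ≤ 3 := by nlinarith [sq_nonneg (X + Y)]
  have hY3 : Y ≤ 3 := by nlinarith
  have ha2 : a ^ 2 = (3 - X - Y) / 6 := by rw [ha]; exact Real.sq_sqrt (by linarith)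
  have hb2 : b ^ 2 = (3 + X + Y) / 6 := by rw [hb]; exact Real.sq_sqrt (by linarith)
  have hc2 : c ^ 2 = (3 + X - Y) / 6 := by rw [hc]; exact Real.sq_sqrt (by linarith)
  have hd2 : d' ^ 2 = (3 - X + Y) / 6 := by rw [hd]; exact Real.sq_sqrt (by linarith)
  have ha0 : 0 ≤ a := ha ▸ Real.sqrt_nonneg _
  have hb0 : 0 ≤ b := hb ▸ Real.sqrt_nonneg _
  have hc0 : 0 ≤ c := hc ▸ Real.sqrt_nonneg _
  have hd0 : 0 ≤ d' := hd ▸ Real.sqrt_nonneg _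
  have habcd : a * b * c * d' = (4 * F - 1) / 6 := by
    have h1 : (a * b * c * d') ^ 2 = ((4 * F - 1) / 6) ^ 2 := by
      rw [show (a * b * c * d') ^ 2 = a ^ 2 * b ^ 2 * c ^ 2 * d' ^ 2 from by ring,
        ha2, hb2, hc2, hd2]
      linear_combination ((-18 + X ^ 2 + (3 - 12 * F ^ 2) - 2 * Y ^ 2) / 1296) * hX2 +
        ((-18 + Y ^ 2 + (12 * F - 12 * F ^ 2) - 2 * (3 - 12 * F ^ 2)) / 1296) * hY2
    have h2 : a * b * c * d' = Real.sqrt ((a * b * c * d') ^ 2) :=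
      (Real.sqrt_sq (by positivity)).symm
    rw [h2, h1, Real.sqrt_sq (by linarith : (0:ℝ) ≤ (4 * F - 1) / 6)]
  have I1 : a ^ 2 * c ^ 2 + b ^ 2 * d' ^ 2 = (1 + 2 * F) / 3 := by
    rw [ha2, hb2, hc2, hd2]
    linear_combination (-1 / 18) * hX2 + (1 / 18) * hY2
  have I2 : a ^ 2 * d' ^ 2 + b ^ 2 * c ^ 2 = (2 - 2 * F) / 3 := by
    rw [ha2, hb2, hc2, hd2]
    linear_combination (1 / 18) * hX2 + (-1 / 18) * hY2
  have Iab : a ^ 2 + b ^ 2 = 1 := by rw [ha2, hb2]; ring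
  have Icd : c ^ 2 + d' ^ 2 = 1 := by rw [hc2, hd2]; ring
  -- complex versions
  have I1C : (a:ℂ) ^ 2 * (c:ℂ) ^ 2 + (b:ℂ) ^ 2 * (d':ℂ) ^ 2 = (1 + 2 * (F:ℂ)) / 3 := by
    exact_mod_cast congrArg (fun x : ℝ => (x : ℂ)) I1
  have I2C : (a:ℂ) ^ 2 * (d':ℂ) ^ 2 + (b:ℂ) ^ 2 * (c:ℂ) ^ 2 = (2 - 2 * (F:ℂ)) / 3 := by
    exact_mod_cast congrArg (fun x : ℝ => (x : ℂ)) I2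
  have habcdC : (a:ℂ) * (b:ℂ) * (c:ℂ) * (d':ℂ) = (4 * (F:ℂ) - 1) / 6 := by
    exact_mod_cast congrArg (fun x : ℝ => (x : ℂ)) habcd
  have IabC : (a:ℂ) ^ 2 + (b:ℂ) ^ 2 = 1 := by
    exact_mod_cast congrArg (fun x : ℝ => (x : ℂ)) Iab
  have IcdC : (c:ℂ) ^ 2 + (d':ℂ) ^ 2 = 1 := by
    exact_mod_cast congrArg (fun x : ℝ => (x : ℂ)) Icd
  have hsC : ((Real.sqrt 2 : ℝ) : ℂ)⁻¹ * ((Real.sqrt 2 : ℝ) : ℂ)⁻¹ = 1 / 2 := by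
    rw [← mul_inv, ← Complex.ofReal_mul, Real.mul_self_sqrt (by norm_num)]
    norm_num
  have key : ((F : ℂ) • dyad phiPlus2 + (((1 - F) / 3 : ℝ) : ℂ) • (1 - dyad phiPlus2) =
      (1 / 4 : ℂ) •
        (dyad ![(a : ℂ), -(b : ℂ)] ⊗ₖ dyad ![(c : ℂ), -(d' : ℂ)] +
         dyad ![(b : ℂ), -(Complex.I * (a : ℂ))] ⊗ₖ dyad ![(d' : ℂ), Complex.I * (c : ℂ)] +
         dyad ![(a : ℂ), (b : ℂ)] ⊗ₖ dyad ![(c : ℂ), (d' : ℂ)] +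
         dyad ![(b : ℂ), Complex.I * (a : ℂ)] ⊗ₖ dyad ![(d' : ℂ), -(Complex.I * (c : ℂ))])) := by
    ext ⟨i, k⟩ ⟨j, l⟩
    fin_cases i <;> fin_cases k <;> fin_cases j <;> fin_cases l <;>
      simp [dyad, Matrix.vecMulVec, phiPlus2, Matrix.kroneckerMap_apply, Matrix.one_apply,
        Matrix.smul_apply, Matrix.add_apply, Matrix.sub_apply, Complex.ofReal_div,
        Pi.star_apply, Complex.star_def, _root_.map_mul, _root_.map_neg, map_inv₀, Complex.conj_ofReal,
        Complex.conj_I, Prod.ext_iff, Fin.ext_iff] <;>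
      first
        | ring1
        | linear_combination ((F:ℂ) - (1 - (F:ℂ)) / 3) * hsC - (1 / 2 : ℂ) * I1C
        | linear_combination (-1 / 2 : ℂ) * I2C
        | linear_combination ((F:ℂ) - (1 - (F:ℂ)) / 3) * hsC - habcdC +
            ((a:ℂ) * (b:ℂ) * (c:ℂ) * (d':ℂ) / 2) * Complex.I_sq
        | linear_combination (-1 / 2 : ℂ) * I2C + ((b:ℂ) ^ 2 * (c:ℂ) ^ 2 / 2) * Complex.I_sq
        | linear_combination (-1 / 2 : ℂ) * I2C + ((a:ℂ) ^ 2 * (d':ℂ) ^ 2 / 2) * Complex.I_sq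
        | linear_combination (2 * (a:ℂ) * (b:ℂ) * (c:ℂ) * (d':ℂ)) * Complex.I_sq
        | linear_combination ((F:ℂ) - (1 - (F:ℂ)) / 3) * hsC - (1 / 2 : ℂ) * I1C +
            (-(a:ℂ) ^ 2 * (c:ℂ) ^ 2 / 2 * (Complex.I ^ 2 - 1)) * Complex.I_sq
  refine ⟨key, ?_⟩
  refine ⟨4, fun _ => 1 / 4,
    ![dyad ![(a : ℂ), -(b : ℂ)], dyad ![(b : ℂ), -(Complex.I * (a : ℂ))],
      dyad ![(a : ℂ), (b : ℂ)], dyad ![(b : ℂ), Complex.I * (a : ℂ)]],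
    ![dyad ![(c : ℂ), -(d' : ℂ)], dyad ![(d' : ℂ), Complex.I * (c : ℂ)],
      dyad ![(c : ℂ), (d' : ℂ)], dyad ![(d' : ℂ), -(Complex.I * (c : ℂ))]],
    fun _ => by norm_num, by norm_num, ?_, ?_, ?_⟩
  · intro i
    fin_cases i <;>
      refine ⟨dyad_psd _, ?_⟩ <;>
      · simp [dyad, Matrix.trace, Matrix.vecMulVec, Fin.sum_univ_two, Pi.star_apply,
          Complex.star_def, _root_.map_mul, _root_.map_neg, Complex.conj_ofReal, Complex.conj_I]
        first
          | linear_combination IabC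
          | linear_combination IabC - (a:ℂ) ^ 2 * Complex.I_sq
  · intro i
    fin_cases i <;>
      refine ⟨dyad_psd _, ?_⟩ <;>
      · simp [dyad, Matrix.trace, Matrix.vecMulVec, Fin.sum_univ_two, Pi.star_apply,
          Complex.star_def, _root_.map_mul, _root_.map_neg, Complex.conj_ofReal, Complex.conj_I]
        first
          | linear_combination IcdC
          | linear_combination IcdC - (c:ℂ) ^ 2 * Complex.I_sq
  · rw [key, Fin.sum_univ_four]
    simp only [Matrix.cons_val_zero, Matrix.cons_val_one, Matrix.head_cons,
      Matrix.cons_val_two, Matrix.tail_cons, Matrix.cons_val_three]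
    push_cast
    rw [smul_add, smul_add, smul_add]
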